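/- Let m ≥ 0. The set of matrices S ∈ M_{(m+2)×2}(K) such that there exist P″ ∈ K^m and Q, R ∈ K^{m+1} with S·X^1_2 = X^{m+1}_{m+2} X^m_{m+1} P″, S·Y^1_2 = Y^{m+1}_{m+2} Q and S·Z^1_2 = Z^{m+1}_{m+2} R equals { S : S_{m+1,1} = S_{m+2,1} = 0, S_{1,2} = 0, and S_{1,1} + S_{1,2} = Σ_{i=2}^{m+2} ε_i (S_{i,1} + S_{i,2}) }, where ε_i = +1 if i ≡ 2 or 3 (mod 4) and ε_i = −1 if i ≡ 0 or 1 (mod 4). In particular this set is a 2m-dimensional subspace of M_{(m+2)×2}(K). -/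

import Mathlib

/-- `X^n_{n+i}`: the `(n+i) × n` matrix whose top `n` rows form the identity and whose
bottom `i` rows are zero. -/
def Xmat (K : Type*) [Field K] (n i : ℕ) : Matrix (Fin (n + i)) (Fin n) K :=
  Matrix.of fun r c => if (r : ℕ) = (c : ℕ) then 1 else 0

/-- `Y^n_{n+i}`: the `(n+i) × n` matrix whose top `i` rows are zero and whose bottom
`n` rows form the identity. -/
def Ymat (K : Type*) [Field K] (n i : ℕ) : Matrix (Fin (n + i)) (Fin n) K :=
  Matrix.of fun r c => if (r : ℕ) = (c : ℕ) + i then 1 else 0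

/-- The matrix `Z^{m+1}_{m+2}`, determined by `(Zr)_1 = r_1 + r_2` and
`(Zr)_i = r_{i-1} + r_{i+1}` for `2 ≤ i ≤ m+2` (1-based, `r_j = 0` for `j > m+1`). -/
def Zmat2 (K : Type*) [Field K] (m : ℕ) : Matrix (Fin (m + 2)) (Fin (m + 1)) K :=
  Matrix.of fun r c =>
    if (r : ℕ) = 0 then (if (c : ℕ) = 0 ∨ (c : ℕ) = 1 then 1 else 0)
    else (if (c : ℕ) + 1 = (r : ℕ) ∨ (c : ℕ) = (r : ℕ) + 1 then 1 else 0)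

/-- `ε_i = +1` if `i ≡ 2, 3 (mod 4)` and `ε_i = -1` if `i ≡ 0, 1 (mod 4)`. -/
def eps4 (K : Type*) [Field K] (i : ℕ) : K :=
  if i % 4 = 2 ∨ i % 4 = 3 then 1 else -1

/-- `Σ_{i=2}^{m+2} ε_i (S_{i,1} + S_{i,2})` (1-based row indices). -/
def rowSum (K : Type*) [Field K] (m : ℕ) (S : Matrix (Fin (m + 2)) (Fin 2) K) : K :=
  ∑ i : Fin (m + 2), (if (i : ℕ) = 0 then 0 else eps4 K ((i : ℕ) + 1)) * (S i 0 + S i 1)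

/-- `S·X^1_2 = X^{m+1}_{m+2} X^m_{m+1} P''`, `S·Y^1_2 = Y^{m+1}_{m+2} Q` and
`S·Z^1_2 = Z^{m+1}_{m+2} R` for some `P'' ∈ K^m`, `Q, R ∈ K^{m+1}`. -/
def cond7 (K : Type*) [Field K] (m : ℕ) (S : Matrix (Fin (m + 2)) (Fin 2) K) : Prop :=
  ∃ (P'' : Fin m → K) (Q R : Fin (m + 1) → K),
    S.mulVec ![1, 0] = (Xmat K (m + 1) 1).mulVec ((Xmat K m 1).mulVec P'') ∧
    S.mulVec ![0, 1] = (Ymat K (m + 1) 1).mulVec Q ∧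
    S.mulVec ![1, 1] = (Zmat2 K m).mulVec R

namespace Stmt7Aux

variable {K : Type*} [Field K]

/-- Extension of a `Fin n`-indexed vector by zero. -/
def ve (n : ℕ) (t : Fin n → K) (k : ℕ) : K := if h : k < n then t ⟨k, h⟩ else 0

lemma ve_lt {n : ℕ} (t : Fin n → K) {k : ℕ} (h : k < n) : ve n t k = t ⟨k, h⟩ := dif_pos h

lemma ve_ge {n : ℕ} (t : Fin n → K) {k : ℕ} (h : n ≤ k) : ve n t k = 0 :=
  dif_neg (by omega)

lemma sum_pick (n k : ℕ) (t : Fin n → K) :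
    (∑ c : Fin n, (if (c : ℕ) = k then (1 : K) else 0) * t c) = ve n t k := by
  by_cases h : k < n
  · rw [ve_lt t h, Finset.sum_eq_single (⟨k, h⟩ : Fin n)]
    · simp
    · intro b _ hb
      have hbk : (b : ℕ) ≠ k := fun hbk => hb (Fin.ext hbk)
      simp [hbk]
    · simp
  · rw [ve_ge t (by omega)]
    apply Finset.sum_eq_zero
    intro c _
    have : (c : ℕ) ≠ k := by have := c.isLt; omega
    simp [this]

lemma Xmat_mulVec (n i : ℕ) (P : Fin n → K) (r : Fin (n + i)) :
    (Xmat K n i).mulVec P r = ve n P r := by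
  rw [← sum_pick n r P]
  simp only [Xmat, Matrix.mulVec, dotProduct, Matrix.of_apply]
  refine Finset.sum_congr rfl fun c _ => ?_
  by_cases h : (c : ℕ) = (r : ℕ)
  · simp [h]
  · rw [if_neg (fun hh => h hh.symm), if_neg h]

lemma XX_mulVec (m : ℕ) (P : Fin m → K) (r : Fin (m + 2)) :
    (Xmat K (m + 1) 1).mulVec ((Xmat K m 1).mulVec P) r = ve m P r := by
  rw [Xmat_mulVec]
  by_cases h : (r : ℕ) < m + 1
  · rw [ve_lt _ h, Xmat_mulVec]
  · rw [ve_ge _ (by omega), ve_ge _ (by omega)]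

lemma Ymat_mulVec (m : ℕ) (Q : Fin (m + 1) → K) (r : Fin (m + 2)) :
    (Ymat K (m + 1) 1).mulVec Q r =
      if (r : ℕ) = 0 then 0 else ve (m + 1) Q ((r : ℕ) - 1) := by
  by_cases h : (r : ℕ) = 0
  · rw [if_pos h]
    simp only [Ymat, Matrix.mulVec, dotProduct, Matrix.of_apply]
    apply Finset.sum_eq_zero
    intro c _
    rw [if_neg (by omega), zero_mul]
  · rw [if_neg h, ← sum_pick (m + 1) ((r : ℕ) - 1) Q]
    simp only [Ymat, Matrix.mulVec, dotProduct, Matrix.of_apply]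
    refine Finset.sum_congr rfl fun c _ => ?_
    by_cases hc : (c : ℕ) = (r : ℕ) - 1
    · rw [if_pos (by omega), if_pos hc]
    · rw [if_neg (by omega), if_neg hc]

lemma Zmat2_mulVec (m : ℕ) (R : Fin (m + 1) → K) (r : Fin (m + 2)) :
    (Zmat2 K m).mulVec R r = ve (m + 1) R ((r : ℕ) - 1) + ve (m + 1) R ((r : ℕ) + 1) := by
  rw [← sum_pick (m + 1) ((r : ℕ) - 1) R, ← sum_pick (m + 1) ((r : ℕ) + 1) R,
    ← Finset.sum_add_distrib]
  simp only [Zmat2, Matrix.mulVec, dotProduct, Matrix.of_apply]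
  refine Finset.sum_congr rfl fun c _ => ?_
  rw [← add_mul]
  congr 1
  by_cases h : (r : ℕ) = 0
  · rw [if_pos h, h]
    by_cases h0 : (c : ℕ) = 0
    · rw [if_pos (Or.inl h0), if_pos (by omega), if_neg (by omega)]
      norm_num
    · by_cases h1 : (c : ℕ) = 1
      · rw [if_pos (Or.inr h1), if_neg (by omega), if_pos (by omega)]
        norm_num
      · rw [if_neg (by tauto), if_neg (by omega), if_neg (by omega)]
        norm_num
  · rw [if_neg h]
    by_cases h0 : (c : ℕ) + 1 = (r : ℕ)
    · rw [if_pos (Or.inl h0), if_pos (by omega), if_neg (by omega)]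
      norm_num
    · by_cases h1 : (c : ℕ) = (r : ℕ) + 1
      · rw [if_pos (Or.inr h1), if_neg (by omega), if_pos h1]
        norm_num
      · rw [if_neg (by tauto), if_neg (by omega), if_neg h1]
        norm_num

lemma eps4_add_two (n : ℕ) : eps4 K (n + 2) = - eps4 K n := by
  unfold eps4
  split_ifs with h1 h2 h3
  · exfalso; omega
  · norm_num
  · norm_num
  · exfalso; omega

lemma alt_sum (g : ℕ → K) (n : ℕ) :
    (∑ i ∈ Finset.range (n + 1),
        (if i = 0 then (0 : K) else eps4 K (i + 1)) * (g (i - 1) + g (i + 1)))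
      = g 0 + g 1 + eps4 K n * g n + eps4 K (n + 1) * g (n + 1) := by
  induction n with
  | zero => simp [eps4]
  | succ n ih =>
    rw [Finset.sum_range_succ, ih, if_neg (Nat.succ_ne_zero n)]
    rw [show n + 1 - 1 = n from rfl, show n + 1 + 1 = n + 2 from rfl, eps4_add_two n]
    ring

lemma mulVec10 {m : ℕ} (S : Matrix (Fin (m + 2)) (Fin 2) K) (i : Fin (m + 2)) :
    S.mulVec ![1, 0] i = S i 0 := by
  simp [Matrix.mulVec, dotProduct, Fin.sum_univ_two]

lemma mulVec01 {m : ℕ} (S : Matrix (Fin (m + 2)) (Fin 2) K) (i : Fin (m + 2)) :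
    S.mulVec ![0, 1] i = S i 1 := by
  simp [Matrix.mulVec, dotProduct, Fin.sum_univ_two]

lemma mulVec11 {m : ℕ} (S : Matrix (Fin (m + 2)) (Fin 2) K) (i : Fin (m + 2)) :
    S.mulVec ![1, 1] i = S i 0 + S i 1 := by
  simp [Matrix.mulVec, dotProduct, Fin.sum_univ_two]

lemma rowSum_eq {m : ℕ} (S : Matrix (Fin (m + 2)) (Fin 2) K) (g : ℕ → K)
    (hg : ∀ i : Fin (m + 2), 1 ≤ (i : ℕ) →
      S i 0 + S i 1 = g ((i : ℕ) - 1) + g ((i : ℕ) + 1))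
    (h1 : g (m + 1) = 0) (h2 : g (m + 2) = 0) :
    rowSum K m S = g 0 + g 1 := by
  unfold rowSum
  have hcong : ∀ i : Fin (m + 2),
      (if (i : ℕ) = 0 then (0 : K) else eps4 K ((i : ℕ) + 1)) * (S i 0 + S i 1)
        = (if (i : ℕ) = 0 then (0 : K) else eps4 K ((i : ℕ) + 1)) *
            (g ((i : ℕ) - 1) + g ((i : ℕ) + 1)) := by
    intro i
    by_cases h : (i : ℕ) = 0
    · simp [h]
    · rw [hg i (by omega)]
  rw [Finset.sum_congr rfl fun i _ => hcong i]
  rw [Fin.sum_univ_eq_sum_range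
    (fun k => (if k = 0 then (0 : K) else eps4 K (k + 1)) * (g (k - 1) + g (k + 1))) (m + 2)]
  rw [show m + 2 = m + 1 + 1 from rfl, alt_sum g (m + 1),
    show m + 1 + 1 = m + 2 from rfl, h1, h2]
  ring

/-- The explicit solution of `Z R = t`. -/
def Rf (m : ℕ) (t : ℕ → K) (j : ℕ) : K :=
  ∑ s ∈ Finset.range (m + 2), (-1 : K) ^ s * t (j + 1 + 2 * s)

lemma Rf_zero {m : ℕ} {t : ℕ → K} (ht : ∀ k, m + 2 ≤ k → t k = 0) {j : ℕ}
    (hj : m + 1 ≤ j) : Rf m t j = 0 := by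
  apply Finset.sum_eq_zero
  intro s _
  rw [ht _ (by omega), mul_zero]

lemma Rf_rec {m : ℕ} {t : ℕ → K} (ht : ∀ k, m + 2 ≤ k → t k = 0) (j : ℕ) :
    Rf m t j = t (j + 1) - Rf m t (j + 2) := by
  have h1 : Rf m t j =
      (∑ s ∈ Finset.range (m + 1), (-1 : K) ^ (s + 1) * t (j + 1 + 2 * (s + 1)))
        + (-1 : K) ^ 0 * t (j + 1 + 2 * 0) :=
    Finset.sum_range_succ' _ (m + 1)
  have h2 : Rf m t (j + 2) =
      (∑ s ∈ Finset.range (m + 1), (-1 : K) ^ s * t (j + 2 + 1 + 2 * s))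
        + (-1 : K) ^ (m + 1) * t (j + 2 + 1 + 2 * (m + 1)) :=
    Finset.sum_range_succ _ (m + 1)
  have h3 : t (j + 2 + 1 + 2 * (m + 1)) = 0 := ht _ (by omega)
  have h4 : ∀ s ∈ Finset.range (m + 1),
      (-1 : K) ^ (s + 1) * t (j + 1 + 2 * (s + 1))
        = -((-1 : K) ^ s * t (j + 2 + 1 + 2 * s)) := by
    intro s _
    rw [show j + 1 + 2 * (s + 1) = j + 2 + 1 + 2 * s from by ring, pow_succ]
    ring
  rw [h1, h2, h3, Finset.sum_congr rfl h4, Finset.sum_neg_distrib]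
  simp
  ring

end Stmt7Aux

open Stmt7Aux in
lemma stmt7_main_iff (K : Type*) [Field K] (m : ℕ) (S : Matrix (Fin (m + 2)) (Fin 2) K) :
    cond7 K m S ↔
      (S ⟨m, Nat.lt_add_of_pos_right Nat.two_pos⟩ 0 = 0 ∧ S ⟨m + 1, Nat.succ_lt_succ (Nat.lt_succ_self m)⟩ 0 = 0 ∧ S 0 1 = 0 ∧
        S 0 0 + S 0 1 = rowSum K m S) := by
  constructor
  · rintro ⟨P, Q, R, h1, h2, h3⟩
    have e1 : ∀ r : Fin (m + 2), S r 0 = ve m P r := by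
      intro r
      have h := congrFun h1 r
      rwa [mulVec10, XX_mulVec] at h
    have e3 : ∀ r : Fin (m + 2),
        S r 0 + S r 1 = ve (m + 1) R ((r : ℕ) - 1) + ve (m + 1) R ((r : ℕ) + 1) := by
      intro r
      have h := congrFun h3 r
      rwa [mulVec11, Zmat2_mulVec] at h
    refine ⟨?_, ?_, ?_, ?_⟩
    · rw [e1 ⟨m, by omega⟩]
      exact ve_ge P (Nat.le_refl m)
    · rw [e1 ⟨m + 1, by omega⟩]
      exact ve_ge P (Nat.le_succ m)
    · have h := congrFun h2 0
      rw [mulVec01, Ymat_mulVec] at h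
      simpa using h
    · rw [rowSum_eq S (ve (m + 1) R) (fun i _ => e3 i) (ve_ge R (by omega))
        (ve_ge R (by omega))]
      have h := e3 0
      simpa using h
  · rintro ⟨hm, hm1, h01, hsum⟩
    set t : ℕ → K := ve (m + 2) (fun i => S i 0 + S i 1) with ht_def
    have ht0 : ∀ k, m + 2 ≤ k → t k = 0 := fun k hk => ve_ge _ hk
    have htval : ∀ i : Fin (m + 2), t (i : ℕ) = S i 0 + S i 1 := by
      intro i
      rw [ht_def, ve_lt _ i.isLt]
    have hRtop : Rf m t (m + 1) = 0 := Rf_zero ht0 (by omega)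
    have hRtop2 : Rf m t (m + 2) = 0 := Rf_zero ht0 (by omega)
    have hrows : ∀ i : Fin (m + 2), 1 ≤ (i : ℕ) →
        S i 0 + S i 1 = Rf m t ((i : ℕ) - 1) + Rf m t ((i : ℕ) + 1) := by
      intro i hi
      rw [← htval i]
      have h := Rf_rec ht0 ((i : ℕ) - 1)
      rw [show (i : ℕ) - 1 + 1 = (i : ℕ) from by omega,
        show (i : ℕ) - 1 + 2 = (i : ℕ) + 1 from by omega] at h
      rw [h]
      ring
    have hrow0 : S 0 0 + S 0 1 = Rf m t 0 + Rf m t 1 := by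
      rw [hsum, rowSum_eq S (Rf m t) hrows hRtop hRtop2]
    refine ⟨fun j => S ⟨(j : ℕ), by omega⟩ 0, fun j => S ⟨(j : ℕ) + 1, by omega⟩ 1,
      fun j => Rf m t (j : ℕ), ?_, ?_, ?_⟩
    · funext r
      rw [mulVec10, XX_mulVec]
      by_cases h : (r : ℕ) < m
      · rw [ve_lt _ h]
      · rw [ve_ge _ (by omega)]
        have : (r : ℕ) = m ∨ (r : ℕ) = m + 1 := by have := r.isLt; omega
        rcases this with h' | h'
        · rw [show r = ⟨m, by omega⟩ from Fin.ext h']; exact hm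
        · rw [show r = ⟨m + 1, by omega⟩ from Fin.ext h']; exact hm1
    · funext r
      rw [mulVec01, Ymat_mulVec]
      by_cases h : (r : ℕ) = 0
      · rw [if_pos h, show r = 0 from Fin.ext h]
        exact h01
      · rw [if_neg h, ve_lt _ (show (r : ℕ) - 1 < m + 1 from by have := r.isLt; omega)]
        congr 1
        exact Fin.ext (by simp; omega)
    · funext r
      rw [mulVec11, Zmat2_mulVec]
      have hve : ∀ k : ℕ, ve (m + 1) (fun j : Fin (m + 1) => Rf m t (j : ℕ)) k = Rf m t k := by
        intro k
        by_cases h : k < m + 1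
        · rw [ve_lt _ h]
        · rw [ve_ge _ (by omega), Rf_zero ht0 (by omega)]
      rw [hve, hve]
      by_cases h : (r : ℕ) = 0
      · rw [h]
        simpa [show r = 0 from Fin.ext h] using hrow0
      · exact hrows r (by omega)


namespace Stmt7Aux

variable {K : Type*} [Field K]

lemma rowSum_add {m : ℕ} (S T : Matrix (Fin (m + 2)) (Fin 2) K) :
    rowSum K m (S + T) = rowSum K m S + rowSum K m T := by
  unfold rowSum
  rw [← Finset.sum_add_distrib]
  refine Finset.sum_congr rfl fun i _ => ?_
  simp only [Matrix.add_apply]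
  ring

lemma rowSum_smul {m : ℕ} (a : K) (S : Matrix (Fin (m + 2)) (Fin 2) K) :
    rowSum K m (a • S) = a * rowSum K m S := by
  unfold rowSum
  rw [Finset.mul_sum]
  refine Finset.sum_congr rfl fun i _ => ?_
  simp only [Matrix.smul_apply, smul_eq_mul]
  ring

/-- The linear map cutting out the subspace. -/
def phi (K : Type*) [Field K] (m : ℕ) :
    Matrix (Fin (m + 2)) (Fin 2) K →ₗ[K] (Fin 4 → K) where
  toFun S := ![S ⟨m, Nat.lt_add_of_pos_right Nat.two_pos⟩ 0, S ⟨m + 1, Nat.succ_lt_succ (Nat.lt_succ_self m)⟩ 0, S 0 1,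
    S 0 0 + S 0 1 - rowSum K m S]
  map_add' S T := by
    funext i
    fin_cases i <;>
      simp [Matrix.add_apply, rowSum_add] <;> ring
  map_smul' a S := by
    funext i
    fin_cases i <;>
      simp [Matrix.smul_apply, rowSum_smul, smul_eq_mul] <;> ring

lemma phi_surjective (m : ℕ) : Function.Surjective (phi K m) := by
  intro v
  match m with
  | 0 =>
    refine ⟨Matrix.of ![![v 0, v 2], ![v 1, v 0 + v 2 - v 3 - v 1]], ?_⟩
    funext i
    fin_cases i <;>
      simp [phi, rowSum, eps4, Fin.sum_univ_two] <;> ring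
  | (k + 1) =>
    set a := v 3 - v 2 + eps4 K (k + 2) * v 0 + eps4 K (k + 3) * v 1 with ha
    set S : Matrix (Fin (k + 3)) (Fin 2) K := Matrix.of fun i j =>
      if (i : ℕ) = 0 ∧ j = 0 then a
      else if (i : ℕ) = 0 ∧ j = 1 then v 2
      else if (i : ℕ) = k + 1 ∧ j = 0 then v 0
      else if (i : ℕ) = k + 2 ∧ j = 0 then v 1
      else 0 with hS
    have hS00 : S 0 0 = a := by simp [hS]
    have hS01 : S 0 1 = v 2 := by simp [hS]
    have hSk1 : S ⟨k + 1, by omega⟩ 0 = v 0 := by simp [hS]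
    have hSk2 : S ⟨k + 2, by omega⟩ 0 = v 1 := by simp [hS]
    have hSk1' : S ⟨k + 1, by omega⟩ 1 = 0 := by simp [hS]
    have hSk2' : S ⟨k + 2, by omega⟩ 1 = 0 := by simp [hS]
    have hzero : ∀ i : Fin (k + 3), (i : ℕ) ≠ k + 1 → (i : ℕ) ≠ k + 2 → (i : ℕ) ≠ 0 →
        S i 0 + S i 1 = 0 := by
      intro i h1 h2 h0
      have hi0 : i ≠ 0 := fun hh => h0 (by rw [hh]; rfl)
      simp [hS, h0, h1, h2, hi0]
    have hrs : rowSum K (k + 1) S = eps4 K (k + 2) * v 0 + eps4 K (k + 3) * v 1 := by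
      unfold rowSum
      show (∑ i : Fin (k + 3),
          (if (i : ℕ) = 0 then (0 : K) else eps4 K ((i : ℕ) + 1)) * (S i 0 + S i 1)) = _
      have hz : ∀ x ∈ (Finset.univ : Finset (Fin (k + 3))),
          x ∉ ({⟨k + 1, by omega⟩, ⟨k + 2, by omega⟩} : Finset (Fin (k + 3))) →
          (if (x : ℕ) = 0 then (0 : K) else eps4 K ((x : ℕ) + 1)) * (S x 0 + S x 1) = 0 := by
        intro x _ hx
        simp only [Finset.mem_insert, Finset.mem_singleton] at hx
        push_neg at hx
        obtain ⟨hx1, hx2⟩ := hx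
        have hv1 : (x : ℕ) ≠ k + 1 := fun hh => hx1 (Fin.ext (by simpa using hh))
        have hv2 : (x : ℕ) ≠ k + 2 := fun hh => hx2 (Fin.ext (by simpa using hh))
        by_cases h0 : (x : ℕ) = 0
        · rw [if_pos h0, zero_mul]
        · rw [hzero x hv1 hv2 h0, mul_zero]
      rw [← Finset.sum_subset (Finset.subset_univ _) hz]
      rw [Finset.sum_pair (by
        intro hcon
        have := congrArg Fin.val hcon
        simp at this)]
      rw [hSk1, hSk2, hSk1', hSk2']
      rw [if_neg (by simp), if_neg (by simp)]
      push_cast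
      ring_nf
    refine ⟨S, ?_⟩
    funext i
    fin_cases i
    · simpa [phi] using hSk1
    · simpa [phi] using hSk2
    · simpa [phi] using hS01
    · simp only [phi, LinearMap.coe_mk, AddHom.coe_mk]
      show S 0 0 + S 0 1 - rowSum K (k + 1) S = v 3
      rw [hS00, hS01, hrs, ha]
      ring

end Stmt7Aux

theorem stmt7 (K : Type*) [Field K] (m : ℕ) :
    (∀ S : Matrix (Fin (m + 2)) (Fin 2) K,
      cond7 K m S ↔
        (S ⟨m, by omega⟩ 0 = 0 ∧ S ⟨m + 1, by omega⟩ 0 = 0 ∧ S 0 1 = 0 ∧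
          S 0 0 + S 0 1 = rowSum K m S)) ∧
    ∃ W : Submodule K (Matrix (Fin (m + 2)) (Fin 2) K),
      (∀ S, S ∈ W ↔ cond7 K m S) ∧ Module.finrank K W = 2 * m := by
  open Stmt7Aux in
  refine ⟨stmt7_main_iff K m, LinearMap.ker (phi K m), fun S => ?_, ?_⟩
  · rw [stmt7_main_iff K m S, LinearMap.mem_ker]
    constructor
    · intro h
      refine ⟨?_, ?_, ?_, ?_⟩
      · simpa [phi] using congrFun h 0
      · simpa [phi] using congrFun h 1
      · simpa [phi] using congrFun h 2
      · have := congrFun h 3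
        simp only [phi, LinearMap.coe_mk, AddHom.coe_mk, Pi.zero_apply] at this
        have h4 : S 0 0 + S 0 1 - rowSum K m S = 0 := by simpa using this
        linear_combination h4
    · rintro ⟨h1, h2, h3, h4⟩
      funext i
      fin_cases i <;> simp [phi, h1, h2, h3]
      linear_combination h4 - h3
  · have hrn := LinearMap.finrank_range_add_finrank_ker (phi K m)
    rw [LinearMap.range_eq_top.2 (phi_surjective m), finrank_top] at hrn
    have hdom : Module.finrank K (Matrix (Fin (m + 2)) (Fin 2) K) = (m + 2) * 2 := by
      rw [Module.finrank_matrix]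
      simp
    have hcod : Module.finrank K (Fin 4 → K) = 4 := Module.finrank_fin_fun K
    rw [hdom, hcod] at hrn
    omega
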